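/- Let f be a nonnegative trigonometric polynomial, g ≥ 2 an integer, and let p be a trigonometric polynomial satisfying the TGM condition (i) at every zero of f and the TGM condition (ii) globally. Let f̂(x) = (1/g) Σ_{y ∈ Ω_g(x/g)} f(y)|p(y)|². If x₀ ∈ [0,2π) is a zero of f, then y₀ = g·x₀ (mod 2π) is a zero of f̂. -/

import Mathlib

open Complex Filter Topology

noncomputable section

lemma trig_cont (f : ℝ → ℝ) (hf : ∃ (c : ℕ) (a : ℤ → ℂ), ∀ x : ℝ,
    (f x : ℂ) = ∑ j ∈ Finset.Icc (-(c : ℤ)) (c : ℤ), a j * Complex.exp (Complex.I * (j : ℂ) * (x : ℂ))) :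
    Continuous f := by
  obtain ⟨c, a, h⟩ := hf
  have   : f = fun x : ℝ => (∑ j ∈ Finset.Icc (-(c : ℤ)) (c : ℤ), a j * Complex.exp (Complex.I * (j : ℂ) * (x : ℂ))).re := by
    funext x; rw [← h x]; simp
  rw [this]
  exact Complex.continuous_re.comp (continuous_finset_sum _ fun j _ => continuous_const.mul
    (Complex.continuous_exp.comp (by fun_prop)))

lemma trig_per (f : ℝ → ℝ) (hf : ∃ (c : ℕ) (a : ℤ → ℂ), ∀ x : ℝ,
    (f x : ℂ) = ∑ j ∈ Finset.Icc (-(c : ℤ)) (c : ℤ), a j * Complex.exp (Complex.I * (j : ℂ) * (x : ℂ))) :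
    Function.Periodic f (2 * Real.pi) := by
  obtain ⟨c, a, h⟩ := hf
  intro x
  have : (f (x + 2 * Real.pi) : ℂ) = (f x : ℂ) := by
    rw [h, h]
    refine Finset.sum_congr rfl fun j _ => ?_
    have : Complex.I * (j : ℂ) * ((x : ℝ) + 2 * Real.pi : ℝ) =
        Complex.I * (j : ℂ) * (x : ℂ) + (j : ℂ) * (2 * (Real.pi : ℂ) * Complex.I) := by
      push_cast; ring
    rw [this, Complex.exp_add, Complex.exp_int_mul_two_pi_mul_I, mul_one]
  exact_mod_cast this

lemma trig_analytic (f : ℝ → ℝ) (hf : ∃ (c : ℕ) (a : ℤ → ℂ), ∀ x : ℝ,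
    (f x : ℂ) = ∑ j ∈ Finset.Icc (-(c : ℤ)) (c : ℤ), a j * Complex.exp (Complex.I * (j : ℂ) * (x : ℂ))) :
    AnalyticOnNhd ℝ f Set.univ := by
  obtain ⟨c, a, h⟩ := hf
  have hF : AnalyticOnNhd ℝ (fun x : ℝ => ∑ j ∈ Finset.Icc (-(c : ℤ)) (c : ℤ), a j * Complex.exp (Complex.I * (j : ℂ) * (x : ℂ))) Set.univ := by
    apply Finset.analyticOnNhd_fun_sum
    intro j _
    apply AnalyticOnNhd.mul analyticOnNhd_const
    have h1 : AnalyticOnNhd ℝ (fun z : ℂ => Complex.exp (Complex.I * (j : ℂ) * z)) Set.univ := by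
      have := (analyticOnNhd_cexp).comp
        ((analyticOnNhd_const.mul analyticOnNhd_id) : AnalyticOnNhd ℂ (fun z : ℂ => Complex.I * (j:ℂ) * z) Set.univ)
        (Set.mapsTo_univ _ _)
      exact this.restrictScalars
    exact h1.comp (Complex.ofRealCLM.analyticOnNhd _) (Set.mapsTo_univ _ _)
  have : f = fun x : ℝ => Complex.reCLM ((fun x : ℝ => ∑ j ∈ Finset.Icc (-(c : ℤ)) (c : ℤ), a j * Complex.exp (Complex.I * (j : ℂ) * (x : ℂ))) x) := by
    funext x; simp only [Complex.reCLM_apply]; rw [← h x]; simp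
  rw [this]
  exact (Complex.reCLM.analyticOnNhd _).comp hF (Set.mapsTo_univ _ _)

theorem main_thm (g : ℕ) (hg : 2 ≤ g)
    (f p : ℝ → ℝ)
    (hf : ∃ (c : ℕ) (a : ℤ → ℂ), ∀ x : ℝ,
    (f x : ℂ) = ∑ j ∈ Finset.Icc (-(c : ℤ)) (c : ℤ), a j * Complex.exp (Complex.I * (j : ℂ) * (x : ℂ)))
    (hf0 : ∀ x, 0 ≤ f x)
    (hp : ∃ (c : ℕ) (a : ℤ → ℂ), ∀ x : ℝ,
    (p x : ℂ) = ∑ j ∈ Finset.Icc (-(c : ℤ)) (c : ℤ), a j * Complex.exp (Complex.I * (j : ℂ) * (x : ℂ)))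
    (hc1 : ∀ x₀ ∈ Set.Ico (0 : ℝ) (2 * Real.pi), f x₀ = 0 →
    ∀ j : ℕ, 1 ≤ j → j < g →
      ∃ L : ℝ,
        Filter.Tendsto (fun x : ℝ => (p (x + 2 * Real.pi * (j : ℝ) / (g : ℝ)))^2 / f x)
          (nhdsWithin x₀ {x : ℝ | f x ≠ 0}) (nhds L))
    (x₀ : ℝ) (hx₀ : x₀ ∈ Set.Ico (0 : ℝ) (2 * Real.pi)) (hzero : f x₀ = 0) :
    ∀ y₀ : ℝ, (∃ m : ℤ, y₀ = (g : ℝ) * x₀ + 2 * Real.pi * (m : ℝ)) →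
      ((g : ℝ))⁻¹ *
    ∑ j ∈ Finset.range g,
      f ((y₀ + 2 * Real.pi * (j : ℝ)) / (g : ℝ)) * (p ((y₀ + 2 * Real.pi * (j : ℝ)) / (g : ℝ)))^2 = 0 := by
  rintro y₀ ⟨m, rfl⟩
  have hgR : (g : ℝ) ≠ 0 := by positivity
  have hfc : Continuous f := trig_cont f hf
  have hpc : Continuous p := trig_cont p hp
  have hfper : Function.Periodic f (2 * Real.pi) := trig_per f hf
  have hpper : Function.Periodic p (2 * Real.pi) := trig_per p hp
  suffices h : ∀ j ∈ Finset.range g,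
      f (((g : ℝ) * x₀ + 2 * Real.pi * (m : ℝ) + 2 * Real.pi * (j : ℝ)) / (g : ℝ)) *
        (p (((g : ℝ) * x₀ + 2 * Real.pi * (m : ℝ) + 2 * Real.pi * (j : ℝ)) / (g : ℝ)))^2 = 0 by
    rw [Finset.sum_eq_zero h, mul_zero]
  intro j hj
  -- the point in question
  set t : ℝ := ((g : ℝ) * x₀ + 2 * Real.pi * (m : ℝ) + 2 * Real.pi * (j : ℝ)) / (g : ℝ) with ht
  set r : ℤ := (m + j) % (g : ℤ) with hrdef
  set q : ℤ := (m + j) / (g : ℤ) with hqdef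
  have hgz : (g : ℤ) ≠ 0 := by exact_mod_cast hgR
  have hmj : m + (j : ℤ) = (g : ℤ) * q + r := (Int.mul_ediv_add_emod (m + j) g).symm
  have hr0 : 0 ≤ r := Int.emod_nonneg _ hgz
  have hrg : r < (g : ℤ) := Int.emod_lt_of_pos _ (by omega)
  have htq : t = (x₀ + 2 * Real.pi * (r : ℝ) / (g : ℝ)) + (q : ℝ) * (2 * Real.pi) := by
    rw [ht]
    have : ((m : ℝ) + (j : ℝ)) = (g : ℝ) * (q : ℝ) + (r : ℝ) := by exact_mod_cast hmj
    field_simp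
    linear_combination (2*Real.pi) * this
  rcases eq_or_lt_of_le hr0 with hr | hr
  · -- r = 0 : t is x₀ mod 2π, so f t = 0
    have : f t = f x₀ := by
      rw [htq, ← hr]
      push_cast
      rw [mul_zero, zero_div, add_zero]
      exact (hfper.int_mul q) x₀
    rw [this, hzero, zero_mul]
  · -- 1 ≤ r < g : mirror point, show p t = 0
    have hpt : p t = p (x₀ + 2 * Real.pi * (r : ℝ) / (g : ℝ)) := by
      rw [htq]; exact (hpper.int_mul q) _
    by_cases hbot : (nhdsWithin x₀ {x : ℝ | f x ≠ 0}).NeBot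
    · obtain ⟨L, hL⟩ := hc1 x₀ hx₀ hzero r.toNat
        (by omega) (by omega)
      have hrcast : ((r.toNat : ℕ) : ℝ) = (r : ℝ) := by
        exact_mod_cast congrArg (fun z : ℤ => (z : ℝ)) (Int.toNat_of_nonneg hr0)
      have hf0lim : Filter.Tendsto f (nhdsWithin x₀ {x : ℝ | f x ≠ 0}) (nhds 0) := by
        rw [← hzero]
        exact (hfc.tendsto x₀).mono_left nhdsWithin_le_nhds
      have h1 : Filter.Tendsto (fun x : ℝ => (p (x + 2 * Real.pi * ((r.toNat : ℕ) : ℝ) / (g : ℝ)))^2)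
          (nhdsWithin x₀ {x : ℝ | f x ≠ 0}) (nhds 0) := by
        have := hL.mul hf0lim
        rw [mul_zero] at this
        refine this.congr' ?_
        filter_upwards [self_mem_nhdsWithin] with x hx
        exact div_mul_cancel₀ _ hx
      have h2 : Filter.Tendsto (fun x : ℝ => (p (x + 2 * Real.pi * ((r.toNat : ℕ) : ℝ) / (g : ℝ)))^2)
          (nhdsWithin x₀ {x : ℝ | f x ≠ 0}) (nhds ((p (x₀ + 2 * Real.pi * ((r.toNat : ℕ) : ℝ) / (g : ℝ)))^2)) := by
        exact (((hpc.comp (continuous_id.add continuous_const)).pow 2).tendsto x₀).mono_left nhdsWithin_le_nhds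
      have := tendsto_nhds_unique h2 h1
      rw [hrcast] at this
      rw [hpt, pow_eq_zero_iff (by norm_num) |>.mp this]
      ring
    · -- f vanishes near x₀, hence everywhere by analyticity
      have hbot' : nhdsWithin x₀ {x : ℝ | f x ≠ 0} = ⊥ := not_neBot.mp hbot
      have hmem : {x : ℝ | f x ≠ 0}ᶜ ∈ nhds x₀ := by
        rw [← Filter.inf_principal_eq_bot]
        exact hbot'
      have hev : f =ᶠ[nhds x₀] 0 := by
        filter_upwards [hmem] with x hx
        simpa using not_not.mp hx
      have hall : Set.EqOn f 0 Set.univ :=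
        (trig_analytic f hf).eqOn_zero_of_preconnected_of_eventuallyEq_zero
          isPreconnected_univ (Set.mem_univ x₀) hev
      rw [hall (Set.mem_univ t)]
      simp


/-- A real-valued function is a trigonometric polynomial: a finite sum `∑_{|j|≤c} a_j e^{ijx}`. -/
def IsTrigPolyR (f : ℝ → ℝ) : Prop :=
  ∃ (c : ℕ) (a : ℤ → ℂ), ∀ x : ℝ,
    (f x : ℂ) = ∑ j ∈ Finset.Icc (-(c : ℤ)) (c : ℤ), a j * Complex.exp (Complex.I * (j : ℂ) * (x : ℂ))

/-- TGM condition (i): for every zero `x₀` of `f` (in `[0,2π)`), for each `k = 1,…,g−1`,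
`lim_{x→x₀} p(x + 2πk/g)² / f(x)` exists finite. -/
def TGMCondOne (f p : ℝ → ℝ) (g : ℕ) : Prop :=
  ∀ x₀ ∈ Set.Ico (0 : ℝ) (2 * Real.pi), f x₀ = 0 →
    ∀ j : ℕ, 1 ≤ j → j < g →
      ∃ L : ℝ,
        Filter.Tendsto (fun x : ℝ => (p (x + 2 * Real.pi * (j : ℝ) / (g : ℝ)))^2 / f x)
          (nhdsWithin x₀ {x : ℝ | f x ≠ 0}) (nhds L)

/-- TGM condition (ii): `∑_{y ∈ Ω_g(x)} p(y)² > 0` for all `x ∈ [0,2π)`. -/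
def TGMCondTwo (p : ℝ → ℝ) (g : ℕ) : Prop :=
  ∀ x ∈ Set.Ico (0 : ℝ) (2 * Real.pi),
    0 < ∑ j ∈ Finset.range g, (p (x + 2 * Real.pi * (j : ℝ) / (g : ℝ)))^2

/-- The projected symbol `f̂(x) = (1/g) ∑_{y ∈ Ω_g(x/g)} f(y) |p(y)|²`. -/
def projSymbol (g : ℕ) (f p : ℝ → ℝ) : ℝ → ℝ := fun x =>
  ((g : ℝ))⁻¹ *
    ∑ j ∈ Finset.range g,
      f ((x + 2 * Real.pi * (j : ℝ)) / (g : ℝ)) * (p ((x + 2 * Real.pi * (j : ℝ)) / (g : ℝ)))^2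


theorem projSymbol_zero_of_zero (g : ℕ) (hg : 2 ≤ g)
    (f p : ℝ → ℝ) (hf : IsTrigPolyR f) (hf0 : ∀ x, 0 ≤ f x) (hp : IsTrigPolyR p)
    (hc1 : TGMCondOne f p g) (hc2 : TGMCondTwo p g)
    (x₀ : ℝ) (hx₀ : x₀ ∈ Set.Ico (0 : ℝ) (2 * Real.pi)) (hzero : f x₀ = 0) :
    ∀ y₀ : ℝ, (∃ m : ℤ, y₀ = (g : ℝ) * x₀ + 2 * Real.pi * (m : ℝ)) →
      projSymbol g f p y₀ = 0 := by
  intro y₀ hy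
  unfold projSymbol
  exact main_thm g hg f p hf hf0 hp hc1 x₀ hx₀ hzero y₀ hy
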